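/- arXiv:1904.07006 — 2 statements merged into one kernel-verified Lean document; each statement's English description precedes it below -/
import Mathlib

section
/- Let f : [a,b] → ℝ with f' continuous on [a,b] and f'' existing and bounded on (a,b). Define the n-th polygonal length L_n = Σ_{k=0}^{n-1} sqrt(Δx² + (f(x_{k+1}) − f(x_k))²) where Δx = (b-a)/n and x_k = a + kΔx. Then L_n converges to ∫_a^b sqrt(1 + f'(x)²) dx as n → ∞. -/
open Set Filter MeasureTheory intervalIntegral

lemma sqrt_one_add_sq_lip (u v : ℝ) :
    |Real.sqrt (1 + u ^ 2) - Real.sqrt (1 + v ^ 2)| ≤ |u - v| := by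
  have hu : Real.sqrt (1 + u ^ 2) ^ 2 = 1 + u ^ 2 := Real.sq_sqrt (by positivity)
  have hv : Real.sqrt (1 + v ^ 2) ^ 2 = 1 + v ^ 2 := Real.sq_sqrt (by positivity)
  have hu0 : 0 ≤ Real.sqrt (1 + u ^ 2) := Real.sqrt_nonneg _
  have hv0 : 0 ≤ Real.sqrt (1 + v ^ 2) := Real.sqrt_nonneg _
  have huu : |u| ≤ Real.sqrt (1 + u ^ 2) := by
    rw [← Real.sqrt_sq_eq_abs]; exact Real.sqrt_le_sqrt (by nlinarith)
  have hvv : |v| ≤ Real.sqrt (1 + v ^ 2) := by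
    rw [← Real.sqrt_sq_eq_abs]; exact Real.sqrt_le_sqrt (by nlinarith)
  rw [abs_sub_le_iff]
  constructor <;>
  nlinarith [abs_nonneg (u - v), sq_abs (u - v), sq_abs u, sq_abs v,
    le_abs_self (u - v), neg_abs_le (u - v), le_abs_self u, le_abs_self v,
    neg_abs_le u, neg_abs_le v]

theorem stmt_3 (a b M : ℝ) (hab : a < b) (f f' f'' : ℝ → ℝ)
    (hf : ∀ x ∈ Set.Icc a b, HasDerivAt f (f' x) x)
    (hf'cont : ContinuousOn f' (Set.Icc a b))
    (hf' : ∀ x ∈ Set.Ioo a b, HasDerivAt f' (f'' x) x)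
    (hM : ∀ x ∈ Set.Ioo a b, |f'' x| ≤ M) :
    Filter.Tendsto
      (fun n : ℕ => ∑ k ∈ Finset.range n,
        Real.sqrt (((b - a) / n)^2 +
          (f (a + (k + 1) * ((b - a) / n)) - f (a + k * ((b - a) / n)))^2))
      Filter.atTop (nhds (∫ x in a..b, Real.sqrt (1 + f' x ^ 2))) := by
  set g : ℝ → ℝ := fun x => Real.sqrt (1 + f' x ^ 2) with hgdef
  set I : ℝ := ∫ x in a..b, g x with hIdef
  have hba : 0 < b - a := sub_pos.mpr hab
  have hgc : ContinuousOn g (Icc a b) :=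
    (continuousOn_const.add (hf'cont.pow 2)).sqrt
  have hM0 : 0 ≤ M :=
    le_trans (abs_nonneg _) (hM ((a + b) / 2) ⟨by linarith, by linarith⟩)
  have hlip : ∀ x ∈ Ioo a b, ∀ y ∈ Ioo a b, |f' y - f' x| ≤ M * |y - x| := by
    intro x hx y hy
    have := (convex_Ioo a b).norm_image_sub_le_of_norm_hasDerivWithin_le
      (fun z hz => (hf' z hz).hasDerivWithinAt)
      (fun z hz => by simpa [Real.norm_eq_abs] using hM z hz) hx hy
    simpa [Real.norm_eq_abs] using this
  -- the key quantitative estimate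
  have key : ∀ n : ℕ, 0 < n →
      |(∑ k ∈ Finset.range n, Real.sqrt (((b - a) / n)^2 +
        (f (a + (k + 1) * ((b - a) / n)) - f (a + k * ((b - a) / n)))^2)) - I|
        ≤ M * (b - a) ^ 2 / n := by
    intro n hn
    have hn' : (0:ℝ) < n := by exact_mod_cast hn
    set h : ℝ := (b - a) / n with hhdef
    have hh0 : 0 < h := by positivity
    set x : ℕ → ℝ := fun k => a + k * h with hxdef
    have hxk : ∀ k : ℕ, x k = a + k * h := fun k => rfl
    have hxsucc : ∀ k : ℕ, x (k + 1) - x k = h := by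
      intro k; simp only [hxk]; push_cast; ring
    have hxmono : ∀ k : ℕ, x k < x (k + 1) := by
      intro k; have := hxsucc k; linarith
    have hx0 : x 0 = a := by simp [hxk]
    have hxn : x n = b := by
      simp only [hxk, hhdef]
      field_simp
      ring
    have hmem : ∀ k ≤ n, x k ∈ Icc a b := by
      intro k hk
      constructor
      · have : (0:ℝ) ≤ k * h := by positivity
        simp only [hxk]; linarith
      · have : (k:ℝ) * h ≤ n * h := by
          have : (k:ℝ) ≤ n := by exact_mod_cast hk
          nlinarith
        have hnb : (n:ℝ) * h = b - a := by rw [hhdef]; field_simp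
        simp only [hxk]; linarith
    have hsub : ∀ k < n, Icc (x k) (x (k + 1)) ⊆ Icc a b := by
      intro k hk
      exact Icc_subset_Icc (hmem k hk.le).1 (hmem (k + 1) hk).2
    have hgint : ∀ k < n, IntervalIntegrable g volume (x k) (x (k + 1)) :=
      fun k hk => (hgc.mono (by rw [uIcc_of_le (hxmono k).le]; exact hsub k hk)).intervalIntegrable
    have htel : ∑ k ∈ Finset.range n, (∫ t in x k..x (k + 1), g t) = I := by
      rw [intervalIntegral.sum_integral_adjacent_intervals hgint, hx0, hxn]
    -- per-interval bound
    have hterm : ∀ k < n,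
        |Real.sqrt (h ^ 2 + (f (x (k + 1)) - f (x k)) ^ 2) - ∫ t in x k..x (k + 1), g t|
          ≤ M * h ^ 2 := by
      intro k hk
      have hlt := hxmono k
      have hIccsub := hsub k hk
      have hIoosub : Ioo (x k) (x (k + 1)) ⊆ Ioo a b := by
        intro t ht
        exact ⟨lt_of_le_of_lt (hmem k hk.le).1 ht.1, lt_of_lt_of_le ht.2 (hmem (k + 1) hk).2⟩
      -- MVT
      obtain ⟨c, hc, hc'⟩ := exists_hasDerivAt_eq_slope f f' hlt
        (fun t ht => (hf t (hIccsub ht)).continuousAt.continuousWithinAt)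
        (fun t ht => hf t (hIccsub (Ioo_subset_Icc_self ht)))
      have hcab : c ∈ Ioo a b := hIoosub hc
      have hfd : f (x (k + 1)) - f (x k) = f' c * h := by
        rw [hc', hxsucc k]; field_simp
      have hterm_eq : Real.sqrt (h ^ 2 + (f (x (k + 1)) - f (x k)) ^ 2) = h * g c := by
        rw [hfd, hgdef]
        rw [show h ^ 2 + (f' c * h) ^ 2 = h ^ 2 * (1 + f' c ^ 2) by ring,
          Real.sqrt_mul (sq_nonneg h), Real.sqrt_sq hh0.le]
      have hconst : (∫ _ in x k..x (k + 1), g c) = h * g c := by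
        rw [intervalIntegral.integral_const, smul_eq_mul, hxsucc k]
      have hdiff : Real.sqrt (h ^ 2 + (f (x (k + 1)) - f (x k)) ^ 2)
          - (∫ t in x k..x (k + 1), g t) = ∫ t in x k..x (k + 1), (g c - g t) := by
        rw [intervalIntegral.integral_sub intervalIntegrable_const (hgint k hk), hconst,
          hterm_eq]
      rw [hdiff]
      have hae : ∀ᵐ t : ℝ, t ∈ Set.uIoc (x k) (x (k + 1)) → ‖g c - g t‖ ≤ M * h := by
        have hne : ∀ᵐ t : ℝ, t ≠ x (k + 1) := by
          rw [MeasureTheory.ae_iff]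
          simp only [not_not]
          exact measure_singleton _
        filter_upwards [hne] with t hne ht
        rw [uIoc_of_le hlt.le] at ht
        have htIoo : t ∈ Ioo (x k) (x (k + 1)) := ⟨ht.1, lt_of_le_of_ne ht.2 hne⟩
        have htab : t ∈ Ioo a b := hIoosub htIoo
        have h1 : |g c - g t| ≤ |f' c - f' t| := sqrt_one_add_sq_lip (f' c) (f' t)
        have h2 : |f' c - f' t| ≤ M * |c - t| := hlip t htab c hcab
        have h3 : |c - t| ≤ h := by
          rw [abs_le]
          have := hxsucc k
          constructor <;> [skip; skip] <;>
            cases' hc with hc1 hc2 <;> cases' htIoo with ht1 ht2 <;> linarith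
        have h4 : M * |c - t| ≤ M * h := by nlinarith [abs_nonneg (c - t)]
        calc ‖g c - g t‖ = |g c - g t| := rfl
          _ ≤ M * h := le_trans h1 (le_trans h2 h4)
      calc |∫ t in x k..x (k + 1), (g c - g t)| = ‖∫ t in x k..x (k + 1), (g c - g t)‖ := rfl
        _ ≤ M * h * |x (k + 1) - x k| :=
            intervalIntegral.norm_integral_le_of_norm_le_const_ae hae
        _ = M * h ^ 2 := by rw [hxsucc k, abs_of_pos hh0]; ring
    -- assemble
    have hrw : ∀ k ∈ Finset.range n,
        Real.sqrt (((b - a) / n)^2 +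
          (f (a + (↑k + 1) * ((b - a) / n)) - f (a + ↑k * ((b - a) / n)))^2)
        = Real.sqrt (h ^ 2 + (f (x (k + 1)) - f (x k)) ^ 2) := by
      intro k _
      have e1 : a + (↑k + 1) * ((b - a) / n) = x (k + 1) := by
        simp only [hxk, hhdef]; push_cast; ring
      have e2 : a + ↑k * ((b - a) / n) = x k := by simp only [hxk, hhdef]
      rw [e1, e2]
    calc |(∑ k ∈ Finset.range n, Real.sqrt (((b - a) / n)^2 +
            (f (a + (↑k + 1) * ((b - a) / n)) - f (a + ↑k * ((b - a) / n)))^2)) - I|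
        = |∑ k ∈ Finset.range n,
            (Real.sqrt (h ^ 2 + (f (x (k + 1)) - f (x k)) ^ 2)
              - ∫ t in x k..x (k + 1), g t)| := by
          rw [Finset.sum_sub_distrib, htel, Finset.sum_congr rfl hrw]
      _ ≤ ∑ k ∈ Finset.range n,
            |Real.sqrt (h ^ 2 + (f (x (k + 1)) - f (x k)) ^ 2)
              - ∫ t in x k..x (k + 1), g t| := Finset.abs_sum_le_sum_abs _ _
      _ ≤ ∑ k ∈ Finset.range n, M * h ^ 2 :=
          Finset.sum_le_sum (fun k hk => hterm k (Finset.mem_range.mp hk))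
      _ = n * (M * h ^ 2) := by rw [Finset.sum_const, Finset.card_range, nsmul_eq_mul]
      _ = M * (b - a) ^ 2 / n := by rw [hhdef]; field_simp
  -- conclude by squeeze
  have hlim : Tendsto (fun n : ℕ => M * (b - a) ^ 2 / n) atTop (nhds 0) :=
    tendsto_const_div_atTop_nhds_zero_nat _
  have hzero : Tendsto (fun n : ℕ => (∑ k ∈ Finset.range n,
      Real.sqrt (((b - a) / n)^2 +
        (f (a + (k + 1) * ((b - a) / n)) - f (a + k * ((b - a) / n)))^2)) - I)
      atTop (nhds 0) := by
    apply squeeze_zero_norm' _ hlim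
    filter_upwards [eventually_gt_atTop 0] with n hn
    exact key n hn
  have := hzero.add_const I
  simpa using this
end

section
/- With the hypotheses and notation as in the uniform polygonal arc length theorem (f' continuous on [a,b], |f''| ≤ M on (a,b)), for every n ≥ 1 one has |L_n − Σ_{k=0}^{n-1} sqrt(1 + f'(x_k)²)·Δx| ≤ M(b-a)²/(2n), where L_n is the n-th uniform polygonal length. -/
theorem stmt_4 (a b M : ℝ) (hab : a < b) (f f' f'' : ℝ → ℝ)
    (hf : ∀ x ∈ Set.Icc a b, HasDerivAt f (f' x) x)
    (hf'cont : ContinuousOn f' (Set.Icc a b))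
    (hf' : ∀ x ∈ Set.Ioo a b, HasDerivAt f' (f'' x) x)
    (hM : ∀ x ∈ Set.Ioo a b, |f'' x| ≤ M) :
    ∀ n : ℕ, 1 ≤ n →
      |(∑ k ∈ Finset.range n,
          Real.sqrt (((b - a) / n)^2 +
            (f (a + (k + 1) * ((b - a) / n)) - f (a + k * ((b - a) / n)))^2)) -
        ∑ k ∈ Finset.range n,
          Real.sqrt (1 + f' (a + k * ((b - a) / n)) ^ 2) * ((b - a) / n)| ≤
        M * (b - a)^2 / (2 * n) := by
  have hM0 : 0 ≤ M :=
    le_trans (abs_nonneg _) (hM ((a + b) / 2) ⟨by linarith, by linarith⟩)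
  have hfc : ContinuousOn f (Set.Icc a b) := fun x hx =>
    (hf x hx).continuousAt.continuousWithinAt
  -- L1 : f' is M-Lipschitz (one-sided form) on [a,b]
  have L1 : ∀ c ∈ Set.Icc a b, ∀ x ∈ Set.Icc a b, c ≤ x →
      |f' x - f' c| ≤ M * (x - c) := by
    have mono1 : MonotoneOn (fun y => M * y - f' y) (Set.Icc a b) := by
      apply monotoneOn_of_hasDerivWithinAt_nonneg (convex_Icc a b)
        ((continuousOn_const.mul continuousOn_id).sub hf'cont)
        (f' := fun y => M - f'' y)
      · rw [interior_Icc]; intro y hy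
        have h := ((hasDerivAt_id y).const_mul M).sub (hf' y hy)
        exact h.hasDerivWithinAt.congr_deriv (by simp)
      · rw [interior_Icc]; intro y hy
        have := (abs_le.mp (hM y hy)).2; linarith
    have mono2 : MonotoneOn (fun y => M * y + f' y) (Set.Icc a b) := by
      apply monotoneOn_of_hasDerivWithinAt_nonneg (convex_Icc a b)
        ((continuousOn_const.mul continuousOn_id).add hf'cont)
        (f' := fun y => M + f'' y)
      · rw [interior_Icc]; intro y hy
        have h := ((hasDerivAt_id y).const_mul M).add (hf' y hy)
        exact h.hasDerivWithinAt.congr_deriv (by simp)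
      · rw [interior_Icc]; intro y hy
        have := (abs_le.mp (hM y hy)).1; linarith
    intro c hc x hx hcx
    have h1 := mono1 hc hx hcx
    have h2 := mono2 hc hx hcx
    simp only at h1 h2
    rw [abs_le]; constructor <;> linarith
  -- L2 : Taylor bound
  have L2 : ∀ c ∈ Set.Icc a b, ∀ d ∈ Set.Icc a b, c ≤ d →
      |f d - f c - f' c * (d - c)| ≤ M * (d - c) ^ 2 / 2 := by
    intro c hc d hd hcd
    have hsub : Set.Icc c d ⊆ Set.Icc a b := Set.Icc_subset_Icc hc.1 hd.2
    have hG : ∀ y ∈ Set.Icc a b,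
        HasDerivAt (fun y => M * (y - c) ^ 2 / 2 - f y + f' c * y)
          (M * (y - c) - f' y + f' c) y := by
      intro y hy
      have h1 : HasDerivAt (fun y => M * (y - c) ^ 2 / 2) (M * (y - c)) y := by
        have := ((((hasDerivAt_id y).sub_const c).pow 2).const_mul M).div_const 2
        exact this.congr_deriv (by simp; ring)
      have h2 : HasDerivAt (fun y => f' c * y) (f' c) y := by
        simpa using (hasDerivAt_id y).const_mul (f' c)
      exact (h1.sub (hf y hy)).add h2
    have hH : ∀ y ∈ Set.Icc a b,
        HasDerivAt (fun y => M * (y - c) ^ 2 / 2 + f y - f' c * y)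
          (M * (y - c) + f' y - f' c) y := by
      intro y hy
      have h1 : HasDerivAt (fun y => M * (y - c) ^ 2 / 2) (M * (y - c)) y := by
        have := ((((hasDerivAt_id y).sub_const c).pow 2).const_mul M).div_const 2
        exact this.congr_deriv (by simp; ring)
      have h2 : HasDerivAt (fun y => f' c * y) (f' c) y := by
        simpa using (hasDerivAt_id y).const_mul (f' c)
      exact (h1.add (hf y hy)).sub h2
    have contG : ContinuousOn (fun y => M * (y - c) ^ 2 / 2 - f y + f' c * y)
        (Set.Icc c d) := by
      apply ContinuousOn.add
      · exact (((continuousOn_id.sub continuousOn_const).pow 2).const_smul M).div_const 2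
          |>.sub (hfc.mono hsub)
      · exact continuousOn_const.mul continuousOn_id
    have contH : ContinuousOn (fun y => M * (y - c) ^ 2 / 2 + f y - f' c * y)
        (Set.Icc c d) := by
      apply ContinuousOn.sub
      · exact (((continuousOn_id.sub continuousOn_const).pow 2).const_smul M).div_const 2
          |>.add (hfc.mono hsub)
      · exact continuousOn_const.mul continuousOn_id
    have monoG : MonotoneOn (fun y => M * (y - c) ^ 2 / 2 - f y + f' c * y)
        (Set.Icc c d) := by
      apply monotoneOn_of_hasDerivWithinAt_nonneg (convex_Icc c d) contG
        (f' := fun y => M * (y - c) - f' y + f' c)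
      · rw [interior_Icc]; intro y hy
        exact (hG y (hsub (Set.mem_Icc.mpr ⟨hy.1.le, hy.2.le⟩))).hasDerivWithinAt
      · rw [interior_Icc]; intro y hy
        have := L1 c hc y (hsub ⟨hy.1.le, hy.2.le⟩) hy.1.le
        have := (abs_le.mp this).2; linarith
    have monoH : MonotoneOn (fun y => M * (y - c) ^ 2 / 2 + f y - f' c * y)
        (Set.Icc c d) := by
      apply monotoneOn_of_hasDerivWithinAt_nonneg (convex_Icc c d) contH
        (f' := fun y => M * (y - c) + f' y - f' c)
      · rw [interior_Icc]; intro y hy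
        exact (hH y (hsub ⟨hy.1.le, hy.2.le⟩)).hasDerivWithinAt
      · rw [interior_Icc]; intro y hy
        have := L1 c hc y (hsub ⟨hy.1.le, hy.2.le⟩) hy.1.le
        have := (abs_le.mp this).1; linarith
    have hcm : c ∈ Set.Icc c d := ⟨le_refl c, hcd⟩
    have hdm : d ∈ Set.Icc c d := ⟨hcd, le_refl d⟩
    have e1 := monoG hcm hdm hcd
    have e2 := monoH hcm hdm hcd
    simp only at e1 e2
    rw [abs_le]; constructor <;> nlinarith
  -- L3 : sqrt(1+x^2) is 1-Lipschitz
  have L3 : ∀ u v : ℝ, |Real.sqrt (1 + u ^ 2) - Real.sqrt (1 + v ^ 2)| ≤ |u - v| := by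
    intro u v
    set s := Real.sqrt (1 + u ^ 2) with hs
    set t := Real.sqrt (1 + v ^ 2) with ht
    have hsu : s ^ 2 = 1 + u ^ 2 := Real.sq_sqrt (by positivity)
    have hsv : t ^ 2 = 1 + v ^ 2 := Real.sq_sqrt (by positivity)
    have hs0 : 0 ≤ s := Real.sqrt_nonneg _
    have ht0 : 0 ≤ t := Real.sqrt_nonneg _
    have hst : 1 + u * v ≤ s * t := by
      nlinarith [sq_nonneg (u - v), sq_nonneg (s * t + (1 + u * v)), mul_nonneg hs0 ht0]
    have hsq : (s - t) ^ 2 ≤ (u - v) ^ 2 := by nlinarith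
    have := Real.sqrt_le_sqrt hsq
    rwa [Real.sqrt_sq_eq_abs, Real.sqrt_sq_eq_abs] at this
  intro n hn
  have hn0 : (0 : ℝ) < n := by exact_mod_cast Nat.lt_of_lt_of_le Nat.zero_lt_one hn
  set δ : ℝ := (b - a) / n with hδdef
  have hδ : 0 < δ := div_pos (by linarith) hn0
  have hnδ : (n : ℝ) * δ = b - a := by rw [hδdef]; field_simp
  have key : ∀ k ∈ Finset.range n,
      |Real.sqrt (δ ^ 2 + (f (a + (k + 1) * δ) - f (a + k * δ)) ^ 2) -
        Real.sqrt (1 + f' (a + k * δ) ^ 2) * δ| ≤ M * δ ^ 2 / 2 := by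
    intro k hk
    have hkn : (k : ℝ) + 1 ≤ n := by
      exact_mod_cast Nat.succ_le_of_lt (Finset.mem_range.mp hk)
    set c := a + k * δ with hc
    set d := a + (k + 1 : ℝ) * δ with hd
    have hk0 : (0 : ℝ) ≤ k := Nat.cast_nonneg k
    have hca : a ≤ c := by nlinarith
    have hdb : d ≤ b := by nlinarith
    have hcd : c ≤ d := by nlinarith
    have hdc : d - c = δ := by rw [hc, hd]; ring
    have hcmem : c ∈ Set.Icc a b := ⟨hca, by linarith⟩
    have hdmem : d ∈ Set.Icc a b := ⟨by linarith, hdb⟩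
    have hT := L2 c hcmem d hdmem hcd
    rw [hdc] at hT
    set u := (f d - f c) / δ with hu
    have hsqrt : Real.sqrt (δ ^ 2 + (f d - f c) ^ 2) = Real.sqrt (1 + u ^ 2) * δ := by
      rw [show δ ^ 2 + (f d - f c) ^ 2 = (1 + u ^ 2) * δ ^ 2 by
        rw [hu]; field_simp]
      rw [Real.sqrt_mul (by positivity), Real.sqrt_sq hδ.le]
    rw [hsqrt, ← sub_mul, abs_mul, abs_of_pos hδ]
    calc |Real.sqrt (1 + u ^ 2) - Real.sqrt (1 + f' c ^ 2)| * δ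
        ≤ |u - f' c| * δ := mul_le_mul_of_nonneg_right (L3 u (f' c)) hδ.le
      _ = |(u - f' c) * δ| := by rw [abs_mul, abs_of_pos hδ]
      _ = |f d - f c - f' c * δ| := by
          rw [sub_mul, hu, div_mul_cancel₀ _ (ne_of_gt hδ)]
      _ ≤ M * δ ^ 2 / 2 := hT
  calc |(∑ k ∈ Finset.range n,
          Real.sqrt (δ ^ 2 + (f (a + (k + 1) * δ) - f (a + k * δ)) ^ 2)) -
        ∑ k ∈ Finset.range n, Real.sqrt (1 + f' (a + k * δ) ^ 2) * δ|
      = |∑ k ∈ Finset.range n,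
          (Real.sqrt (δ ^ 2 + (f (a + (k + 1) * δ) - f (a + k * δ)) ^ 2) -
            Real.sqrt (1 + f' (a + k * δ) ^ 2) * δ)| := by
        rw [Finset.sum_sub_distrib]
    _ ≤ ∑ k ∈ Finset.range n,
          |Real.sqrt (δ ^ 2 + (f (a + (k + 1) * δ) - f (a + k * δ)) ^ 2) -
            Real.sqrt (1 + f' (a + k * δ) ^ 2) * δ| := Finset.abs_sum_le_sum_abs _ _
    _ ≤ ∑ _k ∈ Finset.range n, M * δ ^ 2 / 2 := Finset.sum_le_sum key
    _ = n * (M * δ ^ 2 / 2) := by rw [Finset.sum_const, Finset.card_range]; ring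
    _ = M * (b - a) ^ 2 / (2 * n) := by
        rw [hδdef]; field_simp
end
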